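/- Let Ỹ, Y ∈ ℝ^{n×p} and Z̃, Z ∈ ℝ^{m×p} with m, n > p, all of full column rank, such that [Ỹ; Z̃] and [Y; Z] are column orthonormal (m+n)×p matrices. Then dist(span{Ỹ}, span{Y}) ≤ √(1 + σ_max²({Ỹ, Z̃})) · dist(span{[Ỹ; Z̃]}, span{[Y; Z]}), where σ_max({Ỹ, Z̃}) is the largest generalized singular value of the pair {Ỹ, Z̃}. -/

import Mathlib

open Matrix

/-- The spectral (operator 2-)norm of a real matrix. -/
noncomputable def snorm {m n : Type*} [Fintype m] [Fintype n] [DecidableEq n]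
    (A : Matrix m n ℝ) : ℝ :=
  ‖LinearMap.toContinuousLinearMap (Matrix.toEuclideanLin A)‖

/-- The orthogonal projector onto the column space of a full column rank matrix. -/
noncomputable def projMat {m p : Type*} [Fintype m] [Fintype p] [DecidableEq m]
    [DecidableEq p] (B : Matrix m p ℝ) : Matrix m m ℝ :=
  B * (Bᵀ * B)⁻¹ * Bᵀ

open scoped RealInnerProductSpace

section Abstract

variable {E : Type*} [NormedAddCommGroup E] [InnerProductSpace ℝ E] [FiniteDimensional ℝ E]

set_option linter.unusedSectionVars false

lemma proj_fixed_apply {T : E →L[ℝ] E} (h2 : T * T = T) (y : E) : T (T y) = T y := by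
  conv_rhs => rw [← h2, ContinuousLinearMap.mul_apply]

lemma inner_proj_self {T : E →L[ℝ] E} (hT : IsSelfAdjoint T) (h2 : T * T = T) (x : E) :
    ⟪x, T x⟫ = ‖T x‖ ^ 2 := by
  rw [← real_inner_self_eq_norm_sq]
  calc ⟪x, T x⟫ = ⟪x, T (T x)⟫ := by rw [proj_fixed_apply h2]
  _ = ⟪T x, T x⟫ := (hT.isSymmetric x (T x)).symm

/-- An orthogonal projection is a contraction. -/
lemma proj_contraction {T : E →L[ℝ] E} (hT : IsSelfAdjoint T) (h2 : T * T = T) (x : E) :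
    ‖T x‖ ≤ ‖x‖ := by
  have h1 : ‖T x‖ ^ 2 = ⟪x, T x⟫ := (inner_proj_self hT h2 x).symm
  have h3 : ⟪x, T x⟫ ≤ ‖x‖ * ‖T x‖ := real_inner_le_norm x (T x)
  nlinarith [norm_nonneg (T x), norm_nonneg x]

lemma mem_range_iff_fixed {T : E →L[ℝ] E} (h2 : T * T = T) {x : E} :
    x ∈ LinearMap.range (T : E →ₗ[ℝ] E) ↔ T x = x := by
  constructor
  · rintro ⟨y, rfl⟩
    exact proj_fixed_apply h2 y
  · intro h
    exact ⟨x, h⟩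

lemma norm_sub_proj_sq {T : E →L[ℝ] E} (hT : IsSelfAdjoint T) (h2 : T * T = T) (x : E) :
    ‖x - T x‖ ^ 2 = ‖x‖ ^ 2 - ‖T x‖ ^ 2 := by
  have hfix : ⟪x, T x⟫ = ‖T x‖ ^ 2 := inner_proj_self hT h2 x
  have := norm_sub_sq_real x (T x)
  linarith


lemma one_sub_proj_sa {T : E →L[ℝ] E} (hT : IsSelfAdjoint T) : IsSelfAdjoint (1 - T) := by
  rw [_root_.IsSelfAdjoint, star_sub, star_one, hT.star_eq]

lemma one_sub_proj_idem {T : E →L[ℝ] E} (h2 : T * T = T) : (1 - T) * (1 - T) = 1 - T := by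
  rw [sub_mul, one_mul, mul_sub, mul_one, h2]
  abel

/-- rank/dimension argument: if some unit vector of `ran q` is killed by `p`,
then some unit vector of `ran p` is killed by `q`. -/
lemma exists_unit_ker {p q : E →L[ℝ] E} (hpsa : IsSelfAdjoint p) (hp2 : p * p = p)
    (hqsa : IsSelfAdjoint q) (hq2 : q * q = q)
    (hrank : Module.finrank ℝ (LinearMap.range (p : E →ₗ[ℝ] E)) =
      Module.finrank ℝ (LinearMap.range (q : E →ₗ[ℝ] E)))
    {z : E} (hz : q z = z) (hz0 : z ≠ 0) (hpz : p z = 0) :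
    ∃ x, p x = x ∧ ‖x‖ = 1 ∧ q x = 0 := by
  set S1 := LinearMap.range (p : E →ₗ[ℝ] E) with hS1
  set S2 := LinearMap.range (q : E →ₗ[ℝ] E) with hS2
  by_cases hker : ∃ x : E, x ∈ S1 ∧ x ≠ 0 ∧ q x = 0
  · obtain ⟨x, hx1, hx0, hqx⟩ := hker
    have hxfix : p x = x := (mem_range_iff_fixed hp2).mp hx1
    have hxn : ‖x‖ ≠ 0 := norm_ne_zero_iff.mpr hx0
    refine ⟨‖x‖⁻¹ • x, ?_, ?_, ?_⟩
    · rw [_root_.map_smul, hxfix]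
    · rw [norm_smul, norm_inv, norm_norm, inv_mul_cancel₀ hxn]
    · rw [_root_.map_smul, hqx, smul_zero]
  · push_neg at hker
    have hmem : ∀ x : E, q x ∈ S2 := fun x => LinearMap.mem_range_self _ x
    set g : S1 →ₗ[ℝ] S2 :=
      LinearMap.codRestrict S2 ((q : E →ₗ[ℝ] E).comp S1.subtype) (fun x => hmem x) with hg
    have hginj : Function.Injective g := by
      rw [← LinearMap.ker_eq_bot]
      ext a
      simp only [LinearMap.mem_ker, Submodule.mem_bot]
      constructor
      · intro ha
        have hqa : q (a : E) = 0 := congrArg Subtype.val ha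
        by_contra hne
        have : (a : E) ≠ 0 := fun h => hne (Subtype.ext h)
        exact hker (a : E) a.2 this hqa
      · rintro rfl
        ext
        simp [hg]
    have hsurj : Function.Surjective g :=
      (LinearMap.injective_iff_surjective_of_finrank_eq_finrank hrank).mp hginj
    have hzS2 : z ∈ S2 := ⟨z, hz⟩
    obtain ⟨⟨x, hxS1⟩, hgx⟩ := hsurj ⟨z, hzS2⟩
    have hqx : q x = z := congrArg Subtype.val hgx
    have hxfix : p x = x := (mem_range_iff_fixed hp2).mp hxS1
    have hzero : ⟪z, z⟫ = 0 := by
      calc ⟪z, z⟫ = ⟪q x, z⟫ := by rw [hqx]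
      _ = ⟪x, q z⟫ := hqsa.isSymmetric x z
      _ = ⟪x, z⟫ := by rw [hz]
      _ = ⟪p x, z⟫ := by rw [hxfix]
      _ = ⟪x, p z⟫ := hpsa.isSymmetric x z
      _ = 0 := by rw [hpz, inner_zero_right]
    exact absurd (inner_self_eq_zero.mp hzero) hz0


/-- distance to a projection is at most distance to any fixed point of it. -/
lemma proj_dist_le {T : E →L[ℝ] E} (hT : IsSelfAdjoint T) (h2 : T * T = T)
    (u c : E) (hc : T c = c) : ‖u - T u‖ ≤ ‖u - c‖ := by
  have hrw : u - T u = (1 - T) (u - c) := by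
    simp only [ContinuousLinearMap.sub_apply, ContinuousLinearMap.one_apply, map_sub, hc]
    abel
  rw [hrw]
  exact proj_contraction (one_sub_proj_sa hT) (one_sub_proj_idem h2) (u - c)

/-- The key transfer ("symmetry of sines") lemma. -/
lemma key_transfer {p q : E →L[ℝ] E} (hpsa : IsSelfAdjoint p) (hp2 : p * p = p)
    (hqsa : IsSelfAdjoint q) (hq2 : q * q = q)
    (hrank : Module.finrank ℝ (LinearMap.range (p : E →ₗ[ℝ] E)) =
      Module.finrank ℝ (LinearMap.range (q : E →ₗ[ℝ] E)))
    {b : ℝ} (hb : 0 ≤ b)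
    (H : ∀ x, p x = x → ‖x - q x‖ ≤ b * ‖x‖) :
    ∀ y, q y = y → ‖y - p y‖ ≤ b * ‖y‖ := by
  intro y hy
  by_cases hb1 : 1 ≤ b
  · have h1 : ‖y - p y‖ = ‖(1 - p) y‖ := by
      simp [ContinuousLinearMap.sub_apply]
    have h2 : ‖(1 - p) y‖ ≤ ‖y‖ :=
      proj_contraction (one_sub_proj_sa hpsa) (one_sub_proj_idem hp2) y
    calc ‖y - p y‖ ≤ ‖y‖ := h1 ▸ h2
    _ = 1 * ‖y‖ := (one_mul _).symm
    _ ≤ b * ‖y‖ := by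
        have := norm_nonneg y
        nlinarith
  push_neg at hb1
  by_cases hy0 : y = 0
  · simp [hy0]
  have hnt : Nontrivial E := nontrivial_of_ne y 0 hy0
  suffices Hu : ∀ z, q z = z → ‖z‖ = 1 → ‖z - p z‖ ≤ b by
    have hyn : ‖y‖ ≠ 0 := norm_ne_zero_iff.mpr hy0
    set z := ‖y‖⁻¹ • y with hzdef
    have hz1 : ‖z‖ = 1 := by
      rw [hzdef, norm_smul, norm_inv, norm_norm, inv_mul_cancel₀ hyn]
    have hqz : q z = z := by rw [hzdef, _root_.map_smul, hy]
    have hzy : y = ‖y‖ • z := by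
      rw [hzdef, smul_smul, mul_inv_cancel₀ hyn, one_smul]
    calc ‖y - p y‖ = ‖‖y‖ • z - p (‖y‖ • z)‖ := by rw [← hzy]
    _ = ‖‖y‖ • (z - p z)‖ := by rw [_root_.map_smul, smul_sub]
    _ = ‖y‖ * ‖z - p z‖ := by rw [norm_smul, norm_norm]
    _ ≤ ‖y‖ * b := by
        have := Hu z hqz hz1
        have := norm_nonneg y
        nlinarith
    _ = b * ‖y‖ := mul_comm _ _
  clear hy hy0 y
  intro z hqz hz1
  -- the auxiliary operator
  set T : E →L[ℝ] E := q * p * q + (1 - q) with hTdef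
  have hTsa : IsSelfAdjoint T := by
    rw [_root_.IsSelfAdjoint]
    simp only [hTdef, star_add, star_sub, star_one, StarMul.star_mul,
      hpsa.star_eq, hqsa.star_eq]
    rw [← mul_assoc]
  -- value of the quadratic form of T at q-fixed points
  have hTval : ∀ w, q w = w → ⟪T w, w⟫ = ‖p w‖ ^ 2 := by
    intro w hw
    have hTw : T w = q (p w) := by
      simp only [hTdef, ContinuousLinearMap.add_apply, ContinuousLinearMap.mul_apply,
        ContinuousLinearMap.sub_apply, ContinuousLinearMap.one_apply, hw]
      abel
    calc ⟪T w, w⟫ = ⟪q (p w), w⟫ := by rw [hTw]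
    _ = ⟪p w, q w⟫ := hqsa.isSymmetric (p w) w
    _ = ⟪p w, w⟫ := by rw [hw]
    _ = ‖p w‖ ^ 2 := by rw [real_inner_comm]; exact inner_proj_self hpsa hp2 w
  -- minimise the quadratic form on the unit sphere
  obtain ⟨z0, hz0mem, hz0min⟩ :
      ∃ z0 ∈ Metric.sphere (0 : E) 1, IsMinOn T.reApplyInnerSelf (Metric.sphere (0 : E) 1) z0 :=
    (isCompact_sphere (0 : E) 1).exists_isMinOn
      (NormedSpace.sphere_nonempty.mpr zero_le_one)
      T.reApplyInnerSelf_continuous.continuousOn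
  have hz0norm : ‖z0‖ = 1 := by simpa using hz0mem
  have hre : ∀ w, T.reApplyInnerSelf w = ⟪T w, w⟫ := fun w => rfl
  set μ := T.reApplyInnerSelf z0 with hμdef
  have hμinner : μ = ⟪T z0, z0⟫ := hre z0
  have hmin : ∀ w : E, ‖w‖ = 1 → μ ≤ ⟪T w, w⟫ := by
    intro w hw
    have hwmem : w ∈ Metric.sphere (0 : E) 1 := by simpa using hw
    have := hz0min hwmem
    rw [hμinner]; simpa [hre] using this
  suffices hμb : 1 - μ ≤ b ^ 2 by
    have h1 : ‖z - p z‖ ^ 2 = 1 - ‖p z‖ ^ 2 := by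
      rw [norm_sub_proj_sq hpsa hp2, hz1]; ring
    have h2 : μ ≤ ‖p z‖ ^ 2 := by rw [← hTval z hqz]; exact hmin z hz1
    nlinarith [norm_nonneg (z - p z)]
  by_cases hμ1 : 1 ≤ μ
  · nlinarith [sq_nonneg b]
  push_neg at hμ1
  -- Rayleigh: z0 is an eigenvector of T, with eigenvalue μ
  have hz0ne : z0 ≠ 0 := by
    rw [← norm_ne_zero_iff, hz0norm]; exact one_ne_zero
  have hmem2 : IsMinOn T.reApplyInnerSelf (Metric.sphere (0 : E) ‖z0‖) z0 := by
    rwa [hz0norm]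
  have heig := hTsa.hasEigenvector_of_isMinOn hz0ne hmem2
  set c : ℝ := ⨅ x : { x : E // x ≠ 0 }, T.rayleighQuotient x with hcdef
  have happ : T z0 = c • z0 := heig.apply_eq_smul
  have hcμ : c = μ := by
    have h1 : ⟪T z0, z0⟫ = c * (‖z0‖ * ‖z0‖) := by
      rw [happ, real_inner_smul_left, real_inner_self_eq_norm_mul_norm]
    rw [hμinner, h1, hz0norm]; ring
  rw [hcμ] at happ
  -- q z0 = z0
  have happ' : q (p (q z0)) + z0 - q z0 = μ • z0 := by
    have : T z0 = q (p (q z0)) + z0 - q z0 := by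
      simp only [hTdef, ContinuousLinearMap.add_apply, ContinuousLinearMap.mul_apply,
        ContinuousLinearMap.sub_apply, ContinuousLinearMap.one_apply]
      abel
    rw [← this, happ]
  have happq : q (p (q z0)) = μ • q z0 := by
    have h := congrArg q happ'
    simp only [map_add, map_sub, _root_.map_smul, proj_fixed_apply hq2] at h
    simpa using h
  have hqz0 : q z0 = z0 := by
    have h3 : μ • q z0 + z0 - q z0 = μ • z0 := by rw [← happq]; exact happ'
    have h5 : z0 - q z0 = μ • z0 - μ • q z0 := by
      calc z0 - q z0 = (μ • q z0 + z0 - q z0) - μ • q z0 := by abel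
      _ = μ • z0 - μ • q z0 := by rw [h3]
    have h4 : (1 - μ) • (z0 - q z0) = 0 := by
      rw [sub_smul, one_smul, smul_sub, ← h5, sub_self]
    have hμne : (1 - μ) ≠ 0 := ne_of_gt (by linarith)
    rcases smul_eq_zero.mp h4 with h | h
    · exact absurd h hμne
    · exact (sub_eq_zero.mp h).symm
  have hqpz0 : q (p z0) = μ • z0 := by rw [hqz0] at happq; exact happq
  have hμval : μ = ‖p z0‖ ^ 2 := by rw [hμinner]; exact hTval z0 hqz0
  have hμ0 : 0 ≤ μ := hμval ▸ sq_nonneg _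
  rcases eq_or_lt_of_le hμ0 with hμeq | hμpos
  · -- μ = 0 : rank argument gives a contradiction with b < 1
    exfalso
    have hpz0 : p z0 = 0 := by
      have : ‖p z0‖ ^ 2 = 0 := by rw [← hμval, ← hμeq]
      have := pow_eq_zero_iff (n := 2) (by norm_num) |>.mp this
      exact norm_eq_zero.mp this
    obtain ⟨x, hxfix, hx1, hqx⟩ :=
      exists_unit_ker hpsa hp2 hqsa hq2 hrank hqz0 hz0ne hpz0
    have := H x hxfix
    rw [hqx, sub_zero, hx1, mul_one] at this
    linarith
  · -- μ > 0 : construct the test vector x0 in ran p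
    set ν := ‖p z0‖ with hνdef
    have hν0 : 0 < ν := by
      rw [hνdef]
      by_contra h
      push_neg at h
      have : ν = 0 := le_antisymm (by simpa [hνdef] using h) (norm_nonneg _)
      rw [hμval, hνdef] at hμpos
      rw [hνdef] at this
      nlinarith
    have hν2 : ν ^ 2 = μ := by rw [hμval]
    set x0 : E := ν⁻¹ • p z0 with hx0def
    have hx0fix : p x0 = x0 := by
      rw [hx0def, _root_.map_smul, proj_fixed_apply hp2]
    have hx0norm : ‖x0‖ = 1 := by
      rw [hx0def, norm_smul, norm_inv, Real.norm_eq_abs, abs_of_pos hν0, ← hνdef,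
        inv_mul_cancel₀ (ne_of_gt hν0)]
    have hqx0 : q x0 = (ν⁻¹ * μ) • z0 := by
      rw [hx0def, _root_.map_smul, hqpz0, smul_smul]
    have hqx0norm : ‖q x0‖ ^ 2 = μ := by
      rw [hqx0, norm_smul, Real.norm_eq_abs, hz0norm, mul_one, sq_abs, ← hν2]
      field_simp
    have hH := H x0 hx0fix
    rw [hx0norm, mul_one] at hH
    have hsq : ‖x0 - q x0‖ ^ 2 = 1 - μ := by
      rw [norm_sub_proj_sq hqsa hq2, hx0norm, hqx0norm]; ring
    have hsqle : ‖x0 - q x0‖ ^ 2 ≤ b ^ 2 :=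
      pow_le_pow_left₀ (norm_nonneg (x0 - q x0)) hH 2
    rw [hsq] at hsqle
    exact hsqle

/-- Combine the two one-sided estimates into a norm bound for the difference
of two orthogonal projections. -/
lemma proj_diff_norm_le {p q : E →L[ℝ] E} (hpsa : IsSelfAdjoint p) (hp2 : p * p = p)
    (hqsa : IsSelfAdjoint q) (hq2 : q * q = q) {d : ℝ} (hd : 0 ≤ d)
    (h1 : ∀ x, p x = x → ‖x - q x‖ ≤ d * ‖x‖)
    (h2 : ∀ y, q y = y → ‖y - p y‖ ≤ d * ‖y‖) :
    ‖p - q‖ ≤ d := by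
  apply ContinuousLinearMap.opNorm_le_bound _ hd
  intro z
  have hdecomp : (p - q) z = (p z - q (p z)) - q (z - p z) := by
    simp only [ContinuousLinearMap.sub_apply, map_sub]
    abel
  have h0 : q (p z - q (p z)) = 0 := by
    rw [map_sub, proj_fixed_apply hq2, sub_self]
  have horth : ⟪p z - q (p z), q (z - p z)⟫ = 0 := by
    calc ⟪p z - q (p z), q (z - p z)⟫
        = ⟪q (p z - q (p z)), z - p z⟫ := (hqsa.isSymmetric (p z - q (p z)) (z - p z)).symm
    _ = ⟪(0 : E), z - p z⟫ := by rw [h0]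
    _ = 0 := inner_zero_left _
  have hpyth : ‖(p - q) z‖ ^ 2 = ‖p z - q (p z)‖ ^ 2 + ‖q (z - p z)‖ ^ 2 := by
    rw [hdecomp, norm_sub_sq_real, horth]; ring
  have e1 : ‖p z - q (p z)‖ ≤ d * ‖p z‖ := h1 (p z) (proj_fixed_apply hp2 z)
  -- adjoint trick for the second term
  have hAnorm : ‖q * (1 - p)‖ ≤ d := by
    have hstar : q * (1 - p) = star ((1 - p) * q) := by
      rw [StarMul.star_mul, hqsa.star_eq, (one_sub_proj_sa hpsa).star_eq]
    rw [hstar, ContinuousLinearMap.star_eq_adjoint]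
    rw [ContinuousLinearMap.adjoint.norm_map]
    apply ContinuousLinearMap.opNorm_le_bound _ hd
    intro w
    have hqw : q (q w) = q w := proj_fixed_apply hq2 w
    have := h2 (q w) hqw
    calc ‖((1 - p) * q) w‖ = ‖q w - p (q w)‖ := by
          simp [ContinuousLinearMap.mul_apply, ContinuousLinearMap.sub_apply]
    _ ≤ d * ‖q w‖ := this
    _ ≤ d * ‖w‖ := by
        have := proj_contraction hqsa hq2 w
        nlinarith
  have e2 : ‖q (z - p z)‖ ≤ d * ‖z - p z‖ := by
    have hfix : (1 - p) (z - p z) = z - p z := by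
      simp only [ContinuousLinearMap.sub_apply, ContinuousLinearMap.one_apply, map_sub,
        proj_fixed_apply hp2]
      abel
    calc ‖q (z - p z)‖ = ‖(q * (1 - p)) (z - p z)‖ := by
          rw [ContinuousLinearMap.mul_apply, hfix]
    _ ≤ ‖q * (1 - p)‖ * ‖z - p z‖ := ContinuousLinearMap.le_opNorm _ _
    _ ≤ d * ‖z - p z‖ := by
        have := norm_nonneg (z - p z)
        nlinarith
  have hpz : ‖p z‖ ^ 2 + ‖z - p z‖ ^ 2 = ‖z‖ ^ 2 := by
    have := norm_sub_proj_sq hpsa hp2 z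
    linarith
  have ht1 : ‖p z - q (p z)‖ ^ 2 ≤ (d * ‖p z‖) ^ 2 :=
    pow_le_pow_left₀ (norm_nonneg _) e1 2
  have ht2 : ‖q (z - p z)‖ ^ 2 ≤ (d * ‖z - p z‖) ^ 2 :=
    pow_le_pow_left₀ (norm_nonneg _) e2 2
  have hfin : ‖(p - q) z‖ ^ 2 ≤ (d * ‖z‖) ^ 2 := by
    calc ‖(p - q) z‖ ^ 2 = ‖p z - q (p z)‖ ^ 2 + ‖q (z - p z)‖ ^ 2 := hpyth
    _ ≤ (d * ‖p z‖) ^ 2 + (d * ‖z - p z‖) ^ 2 := add_le_add ht1 ht2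
    _ = d ^ 2 * (‖p z‖ ^ 2 + ‖z - p z‖ ^ 2) := by ring
    _ = d ^ 2 * ‖z‖ ^ 2 := by rw [hpz]
    _ = (d * ‖z‖) ^ 2 := by ring
  exact le_of_pow_le_pow_left₀ (by norm_num) (mul_nonneg hd (norm_nonneg z)) hfin

end Abstract

section Bridge

open Module

/-- matrix → continuous linear map between Euclidean spaces -/
noncomputable def toC {ι κ : Type*} [Fintype ι] [Fintype κ] [DecidableEq κ]
    (A : Matrix ι κ ℝ) : EuclideanSpace ℝ κ →L[ℝ] EuclideanSpace ℝ ι :=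
  LinearMap.toContinuousLinearMap (Matrix.toEuclideanLin A)

variable {ι κ ρ : Type*} [Fintype ι] [Fintype κ] [Fintype ρ]
  [DecidableEq ι] [DecidableEq κ] [DecidableEq ρ]

lemma toC_mul (A : Matrix ι κ ℝ) (B : Matrix κ ρ ℝ) :
    toC (A * B) = (toC A).comp (toC B) := by
  apply ContinuousLinearMap.ext
  intro x
  show Matrix.toEuclideanLin (A * B) x = Matrix.toEuclideanLin A (Matrix.toEuclideanLin B x)
  simp [Matrix.toEuclideanLin_apply, Matrix.mulVec_mulVec]

lemma toC_one : toC (1 : Matrix ι ι ℝ) = ContinuousLinearMap.id ℝ _ := by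
  apply ContinuousLinearMap.ext
  intro x
  show Matrix.toEuclideanLin (1 : Matrix ι ι ℝ) x = x
  simp [Matrix.toEuclideanLin_apply, Matrix.one_mulVec]

lemma toC_sub (A B : Matrix ι κ ℝ) : toC (A - B) = toC A - toC B := by
  apply ContinuousLinearMap.ext
  intro x
  show Matrix.toEuclideanLin (A - B) x = Matrix.toEuclideanLin A x - Matrix.toEuclideanLin B x
  rw [map_sub]
  rfl

lemma toC_adjoint (A : Matrix ι κ ℝ) :
    ContinuousLinearMap.adjoint (toC A) = toC Aᵀ := by
  rw [toC, toC, ← LinearMap.adjoint_toContinuousLinearMap]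
  congr 1
  rw [← Matrix.toEuclideanLin_conjTranspose_eq_adjoint,
    Matrix.conjTranspose_eq_transpose_of_trivial]

lemma inner_toC_left (A : Matrix ι κ ℝ) (x : EuclideanSpace ℝ κ) (y : EuclideanSpace ℝ ι) :
    ⟪toC A x, y⟫ = ⟪x, toC Aᵀ y⟫ := by
  rw [← toC_adjoint]
  exact (ContinuousLinearMap.adjoint_inner_right (toC A) x y).symm

lemma inner_toC_toC (A : Matrix ι κ ℝ) (x y : EuclideanSpace ℝ κ) :
    ⟪toC A x, toC A y⟫ = ⟪x, toC (Aᵀ * A) y⟫ := by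
  rw [inner_toC_left, toC_mul]
  rfl

lemma norm_toC_of_ortho {A : Matrix ι κ ℝ} (h : Aᵀ * A = 1) (x : EuclideanSpace ℝ κ) :
    ‖toC A x‖ = ‖x‖ := by
  have h2 : ⟪toC A x, toC A x⟫ = ⟪x, x⟫ := by
    rw [inner_toC_toC, h, toC_one]
    rfl
  have h3 : ‖toC A x‖ ^ 2 = ‖x‖ ^ 2 := by
    rw [← real_inner_self_eq_norm_sq, ← real_inner_self_eq_norm_sq, h2]
  calc ‖toC A x‖ = √(‖toC A x‖ ^ 2) := (Real.sqrt_sq (norm_nonneg _)).symm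
  _ = √(‖x‖ ^ 2) := by rw [h3]
  _ = ‖x‖ := Real.sqrt_sq (norm_nonneg _)

lemma toC_sa_of_symm {A : Matrix ι ι ℝ} (h : Aᵀ = A) : IsSelfAdjoint (toC A) := by
  rw [ContinuousLinearMap.isSelfAdjoint_iff', toC_adjoint, h]

lemma toC_mul_eq (A B : Matrix ι ι ℝ) : toC A * toC B = toC (A * B) := (toC_mul A B).symm

/-- row-orthonormal matrices are contractions -/
lemma norm_toC_le_of_ortho' {A : Matrix ι κ ℝ} (h : A * Aᵀ = 1) (w : EuclideanSpace ℝ κ) :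
    ‖toC A w‖ ≤ ‖w‖ := by
  set R := toC (Aᵀ * A) with hR
  have hRsa : IsSelfAdjoint R := by
    apply toC_sa_of_symm
    rw [Matrix.transpose_mul, Matrix.transpose_transpose]
  have hRidem : R * R = R := by
    rw [hR, toC_mul_eq]
    congr 1
    calc Aᵀ * A * (Aᵀ * A) = Aᵀ * (A * Aᵀ) * A := by
          rw [Matrix.mul_assoc, Matrix.mul_assoc, Matrix.mul_assoc]
    _ = Aᵀ * A := by rw [h, Matrix.mul_one]
  have h1 : ‖toC A w‖ ^ 2 = ⟪w, R w⟫ := by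
    rw [← real_inner_self_eq_norm_sq, inner_toC_toC, hR]
  have h2 : ⟪w, R w⟫ = ‖R w‖ ^ 2 := inner_proj_self hRsa hRidem w
  have h3 : ‖R w‖ ≤ ‖w‖ := proj_contraction hRsa hRidem w
  have h4 : ‖toC A w‖ ^ 2 ≤ ‖w‖ ^ 2 := by
    rw [h1, h2]
    exact pow_le_pow_left₀ (norm_nonneg _) h3 2
  exact le_of_pow_le_pow_left₀ (by norm_num) (norm_nonneg w) h4

lemma norm_sq_eucl (x : EuclideanSpace ℝ ι) : ‖x‖ ^ 2 = ∑ i, x i ^ 2 := by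
  rw [EuclideanSpace.norm_eq, Real.sq_sqrt]
  · congr 1
    ext i
    rw [Real.norm_eq_abs, sq_abs]
  · exact Finset.sum_nonneg fun i _ => sq_nonneg _

lemma toC_diagonal_apply (β : ι → ℝ) (w : EuclideanSpace ℝ ι) (i : ι) :
    toC (Matrix.diagonal β) w i = β i * w i := by
  show Matrix.toEuclideanLin (Matrix.diagonal β) w i = β i * w i
  rw [Matrix.toEuclideanLin_apply]
  simp [Matrix.mulVec_diagonal]

lemma norm_toC_diagonal_ge {β : ι → ℝ} {c : ℝ} (hc : 0 ≤ c) (h : ∀ i, c ≤ β i)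
    (w : EuclideanSpace ℝ ι) : c * ‖w‖ ≤ ‖toC (Matrix.diagonal β) w‖ := by
  have h1 : (c * ‖w‖) ^ 2 ≤ ‖toC (Matrix.diagonal β) w‖ ^ 2 := by
    rw [norm_sq_eucl, mul_pow, norm_sq_eucl, Finset.mul_sum]
    apply Finset.sum_le_sum
    intro i _
    rw [toC_diagonal_apply]
    have hc2 : c ^ 2 ≤ β i ^ 2 := by nlinarith [h i]
    calc c ^ 2 * w i ^ 2 ≤ β i ^ 2 * w i ^ 2 := mul_le_mul_of_nonneg_right hc2 (sq_nonneg _)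
    _ = (β i * w i) ^ 2 := by ring
  exact le_of_pow_le_pow_left₀ (by norm_num) (norm_nonneg _) h1

end Bridge

section MatrixFacts

open Module

variable {ι κ : Type*} [Fintype ι] [DecidableEq ι] [Fintype κ] [DecidableEq κ] {k : ℕ}

lemma snorm_eq_norm_toC (A : Matrix ι κ ℝ) : snorm A = ‖toC A‖ := rfl

lemma gram_isUnit {A : Matrix ι (Fin k) ℝ} (h : A.rank = k) : IsUnit (Aᵀ * A).det := by
  have hinj : Function.Injective A.mulVecLin := by
    rw [← LinearMap.ker_eq_bot]
    have hrn := LinearMap.finrank_range_add_finrank_ker A.mulVecLin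
    rw [show Module.finrank ℝ (Fin k → ℝ) = k by simp] at hrn
    have h' : Module.finrank ℝ (LinearMap.range A.mulVecLin) = k := h
    have hker : Module.finrank ℝ (LinearMap.ker A.mulVecLin) = 0 := by omega
    exact Submodule.finrank_eq_zero.mp hker
  have hinj2 : Function.Injective ((Aᵀ * A).mulVec) := by
    intro x y hxy
    have h0 : (Aᵀ * A) *ᵥ (x - y) = 0 := by
      rw [Matrix.mulVec_sub, hxy, sub_self]
    have h1 : (A *ᵥ (x - y)) ⬝ᵥ (A *ᵥ (x - y)) = 0 := by
      have h2 : (x - y) ⬝ᵥ ((Aᵀ * A) *ᵥ (x - y)) = 0 := by rw [h0, dotProduct_zero]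
      rw [← Matrix.mulVec_mulVec, Matrix.dotProduct_mulVec, Matrix.vecMul_transpose] at h2
      exact h2
    have h2 : A *ᵥ (x - y) = 0 := dotProduct_self_eq_zero.mp h1
    have h3 : x - y = 0 := by
      apply hinj
      simpa using h2
    exact sub_eq_zero.mp h3
  rw [← Matrix.isUnit_iff_isUnit_det]
  exact Matrix.mulVec_injective_iff_isUnit.mp hinj2

lemma projMat_transpose (B : Matrix ι (Fin k) ℝ) : (projMat B)ᵀ = projMat B := by
  unfold projMat
  rw [Matrix.transpose_mul, Matrix.transpose_mul, Matrix.transpose_transpose,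
    Matrix.transpose_nonsing_inv, Matrix.transpose_mul, Matrix.transpose_transpose,
    ← Matrix.mul_assoc]

lemma projMat_mul_self {B : Matrix ι (Fin k) ℝ} (hdet : IsUnit (Bᵀ * B).det) :
    projMat B * B = B := by
  unfold projMat
  rw [Matrix.mul_assoc, Matrix.mul_assoc, Matrix.nonsing_inv_mul _ hdet, Matrix.mul_one]

lemma projMat_eq_assoc (B : Matrix ι (Fin k) ℝ) :
    projMat B = B * ((Bᵀ * B)⁻¹ * Bᵀ) := by
  unfold projMat
  rw [Matrix.mul_assoc]

lemma projMat_idem {B : Matrix ι (Fin k) ℝ} (hdet : IsUnit (Bᵀ * B).det) :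
    projMat B * projMat B = projMat B := by
  calc projMat B * projMat B = projMat B * B * ((Bᵀ * B)⁻¹ * Bᵀ) := by
        rw [Matrix.mul_assoc, ← projMat_eq_assoc]
  _ = B * ((Bᵀ * B)⁻¹ * Bᵀ) := by rw [projMat_mul_self hdet]
  _ = projMat B := (projMat_eq_assoc B).symm

lemma finrank_range_toC_projMat {B : Matrix ι (Fin k) ℝ} (hdet : IsUnit (Bᵀ * B).det) :
    Module.finrank ℝ (LinearMap.range
      ((toC (projMat B)) : EuclideanSpace ℝ ι →ₗ[ℝ] EuclideanSpace ℝ ι)) = B.rank := by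
  have hrange : LinearMap.range ((toC (projMat B)) : EuclideanSpace ℝ ι →ₗ[ℝ] EuclideanSpace ℝ ι)
      = LinearMap.range ((toC B) : EuclideanSpace ℝ (Fin k) →ₗ[ℝ] EuclideanSpace ℝ ι) := by
    apply le_antisymm
    · rintro y ⟨x, rfl⟩
      refine ⟨toC ((Bᵀ * B)⁻¹ * Bᵀ) x, ?_⟩
      show toC B (toC ((Bᵀ * B)⁻¹ * Bᵀ) x) = toC (projMat B) x
      rw [← ContinuousLinearMap.comp_apply, ← toC_mul, ← projMat_eq_assoc]
    · rintro y ⟨x, rfl⟩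
      refine ⟨toC B x, ?_⟩
      show toC (projMat B) (toC B x) = toC B x
      rw [← ContinuousLinearMap.comp_apply, ← toC_mul, projMat_mul_self hdet]
  rw [hrange]
  have hcoe : ((toC B) : EuclideanSpace ℝ (Fin k) →ₗ[ℝ] EuclideanSpace ℝ ι)
      = Matrix.toEuclideanLin B := rfl
  rw [hcoe]
  exact (Matrix.rank_eq_finrank_range_toLin B (PiLp.basisFun 2 ℝ ι)
    (PiLp.basisFun 2 ℝ (Fin k))).symm

lemma gram_of_decomp {G : Matrix ι κ ℝ} {d : κ → ℝ} {C : Matrix κ κ ℝ} (hG : Gᵀ * G = 1) :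
    (G * Matrix.diagonal d * C)ᵀ * (G * Matrix.diagonal d * C) =
      Cᵀ * (Matrix.diagonal (d * d) * C) := by
  rw [Matrix.transpose_mul, Matrix.transpose_mul, Matrix.diagonal_transpose]
  simp only [Matrix.mul_assoc]
  rw [← Matrix.mul_assoc Gᵀ G, hG, Matrix.one_mul, ← Matrix.mul_assoc (Matrix.diagonal d),
    Matrix.diagonal_mul_diagonal]
  rfl

end MatrixFacts

/-- for column orthonormal stacked matrices `[Ỹ; Z̃]` and `[Y; Z]`
with all blocks of full column rank,
`dist(span Ỹ, span Y) ≤ √(1 + σ_max²({Ỹ, Z̃})) ⬝ dist(span [Ỹ; Z̃], span [Y; Z])`,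
where `σ_max({Ỹ, Z̃})` is the largest generalized singular value `α_i/β_i`
from the GSVD `Z̃ = W C X⁻¹`, `Ỹ = G S X⁻¹` with `C² + S² = I`. The subspace
distance is the spectral norm of the difference of the orthogonal projectors. -/
theorem upper_block_distance_bound
    (m n p : ℕ) (hp : 0 < p) (hpn : p < n) (hpm : p < m)
    (Yt Y : Matrix (Fin n) (Fin p) ℝ) (Zt Z : Matrix (Fin m) (Fin p) ℝ)
    (hYt : Yt.rank = p) (hY : Y.rank = p) (hZt : Zt.rank = p) (hZ : Z.rank = p)
    (horth1 : (Matrix.fromRows Yt Zt)ᵀ * Matrix.fromRows Yt Zt = 1)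
    (horth2 : (Matrix.fromRows Y Z)ᵀ * Matrix.fromRows Y Z = 1)
    -- the (compact) GSVD of the pair {Ỹ, Z̃}
    (W : Matrix (Fin m) (Fin p) ℝ) (G : Matrix (Fin n) (Fin p) ℝ)
    (X : Matrix (Fin p) (Fin p) ℝ) (α β : Fin p → ℝ)
    (hW : Wᵀ * W = 1) (hG : Gᵀ * G = 1) (hX : IsUnit X.det)
    (hZtdecomp : Zt = W * Matrix.diagonal α * X⁻¹)
    (hYtdecomp : Yt = G * Matrix.diagonal β * X⁻¹)
    (hCS : ∀ i, α i ^ 2 + β i ^ 2 = 1)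
    (hα : ∀ i, 0 < α i ∧ α i < 1) (hβ : ∀ i, 0 < β i ∧ β i < 1) :
    snorm (projMat Yt - projMat Y) ≤
      Real.sqrt (1 + (⨆ i, α i / β i) ^ 2) *
        snorm (projMat (Matrix.fromRows Yt Zt) - projMat (Matrix.fromRows Y Z)) := by
  set Um := Matrix.fromRows Yt Zt with hUm
  set Vm := Matrix.fromRows Y Z with hVm
  have hdetU : IsUnit (Umᵀ * Um).det := by rw [horth1]; simp
  have hdetV : IsUnit (Vmᵀ * Vm).det := by rw [horth2]; simp
  have hdetYt : IsUnit (Ytᵀ * Yt).det := gram_isUnit hYt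
  have hdetY : IsUnit (Yᵀ * Y).det := gram_isUnit hY
  have hUU : Ytᵀ * Yt + Ztᵀ * Zt = 1 := by
    have h := horth1
    rw [hUm, Matrix.transpose_fromRows, Matrix.fromCols_mul_fromRows] at h
    exact h
  have hXinv : X * X⁻¹ = 1 := Matrix.mul_nonsing_inv X hX
  have hXmul : X⁻¹ * X = 1 := Matrix.nonsing_inv_mul X hX
  have h1 : (X⁻¹)ᵀ * X⁻¹ = 1 := by
    have hYg : Ytᵀ * Yt = (X⁻¹)ᵀ * (Matrix.diagonal (β * β) * X⁻¹) := by
      rw [hYtdecomp]; exact gram_of_decomp hG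
    have hZg : Ztᵀ * Zt = (X⁻¹)ᵀ * (Matrix.diagonal (α * α) * X⁻¹) := by
      rw [hZtdecomp]; exact gram_of_decomp hW
    have hsum : Matrix.diagonal (β * β) + Matrix.diagonal (α * α) = (1 : Matrix (Fin p) (Fin p) ℝ) := by
      rw [Matrix.diagonal_add]
      have hfun : (fun i => (β * β) i + (α * α) i) = fun _ => (1 : ℝ) := funext fun i => by
        have := hCS i; simp only [Pi.mul_apply]; nlinarith
      rw [hfun]
      exact Matrix.diagonal_one
    calc (X⁻¹)ᵀ * X⁻¹ = (X⁻¹)ᵀ * (1 * X⁻¹) := by rw [Matrix.one_mul]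
    _ = (X⁻¹)ᵀ * ((Matrix.diagonal (β * β) + Matrix.diagonal (α * α)) * X⁻¹) := by rw [hsum]
    _ = Ytᵀ * Yt + Ztᵀ * Zt := by rw [Matrix.add_mul, Matrix.mul_add, hYg, hZg]
    _ = 1 := hUU
  have h2 : X⁻¹ * (X⁻¹)ᵀ = 1 := mul_eq_one_comm.mp h1
  have h4 : (X⁻¹)ᵀ = X := by
    calc (X⁻¹)ᵀ = (X * X⁻¹) * (X⁻¹)ᵀ := by rw [hXinv, Matrix.one_mul]
    _ = X * (X⁻¹ * (X⁻¹)ᵀ) := by rw [Matrix.mul_assoc]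
    _ = X := by rw [h2, Matrix.mul_one]
  have hXtinv : Xᵀ = X⁻¹ := by
    conv_lhs => rw [← h4, Matrix.transpose_transpose]
  have hXT : Xᵀ * X = 1 := by rw [hXtinv, hXmul]
  -- minimal β
  have hne : (Finset.univ : Finset (Fin p)).Nonempty := ⟨⟨0, hp⟩, Finset.mem_univ _⟩
  obtain ⟨i0, -, hi0⟩ := Finset.exists_min_image Finset.univ β hne
  have hβ0 : 0 < β i0 := (hβ i0).1
  -- CLM projections
  set p1 := toC (projMat Yt) with hp1
  set p2 := toC (projMat Y) with hp2
  have hp1sa : IsSelfAdjoint p1 := toC_sa_of_symm (projMat_transpose Yt)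
  have hp2sa : IsSelfAdjoint p2 := toC_sa_of_symm (projMat_transpose Y)
  have hp1idem : p1 * p1 = p1 := by rw [hp1, toC_mul_eq, projMat_idem hdetYt]
  have hp2idem : p2 * p2 = p2 := by rw [hp2, toC_mul_eq, projMat_idem hdetY]
  set ε := snorm (projMat Um - projMat Vm) with hεd
  have hεnorm : ε = ‖toC (projMat Um - projMat Vm)‖ := rfl
  have hε0 : 0 ≤ ε := by rw [hεnorm]; exact norm_nonneg _
  set d := (β i0)⁻¹ * ε with hd
  have hd0 : 0 ≤ d := mul_nonneg (inv_nonneg.mpr hβ0.le) hε0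
  -- the top-block extraction matrix
  set S : Matrix (Fin n) (Fin n ⊕ Fin m) ℝ := Matrix.fromCols 1 0 with hS
  have hSrow : S * Sᵀ = 1 := by
    rw [hS, Matrix.transpose_fromCols, Matrix.transpose_one, Matrix.transpose_zero,
      Matrix.fromCols_mul_fromRows]
    simp
  have hSU : S * Um = Yt := by
    rw [hS, hUm, Matrix.fromCols_mul_fromRows, Matrix.one_mul, Matrix.zero_mul, add_zero]
  have hSV : S * Vm = Y := by
    rw [hS, hVm, Matrix.fromCols_mul_fromRows, Matrix.one_mul, Matrix.zero_mul, add_zero]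
  -- the one-sided estimate on ran p1
  have hKey1 : ∀ u : EuclideanSpace ℝ (Fin n), p1 u = u → ‖u - p2 u‖ ≤ d * ‖u‖ := by
    intro u hu
    set xh := toC ((Ytᵀ * Yt)⁻¹ * Ytᵀ) u with hxh
    have hu2 : u = toC Yt xh := by
      conv_lhs => rw [← hu]
      rw [hp1, hxh, ← ContinuousLinearMap.comp_apply, ← toC_mul, ← projMat_eq_assoc]
    have hv : toC (projMat Um) (toC Um xh) = toC Um xh := by
      rw [← ContinuousLinearMap.comp_apply, ← toC_mul, projMat_mul_self hdetU]
    have hvQsub : toC Um xh - toC (projMat Vm) (toC Um xh) =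
        toC (projMat Um - projMat Vm) (toC Um xh) := by
      rw [toC_sub, ContinuousLinearMap.sub_apply, hv]
    have hvQ : ‖toC Um xh - toC (projMat Vm) (toC Um xh)‖ ≤ ε * ‖toC Um xh‖ := by
      rw [hvQsub]
      calc ‖toC (projMat Um - projMat Vm) (toC Um xh)‖
          ≤ ‖toC (projMat Um - projMat Vm)‖ * ‖toC Um xh‖ :=
            (toC (projMat Um - projMat Vm)).le_opNorm _
      _ = ε * ‖toC Um xh‖ := by rw [← hεnorm]
    have hQv2 : toC (projMat Vm) (toC Um xh) =
        toC Vm (toC ((Vmᵀ * Vm)⁻¹ * Vmᵀ) (toC Um xh)) := by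
      conv_rhs => rw [← ContinuousLinearMap.comp_apply, ← toC_mul, ← projMat_eq_assoc]
    have hp2y' : p2 (toC Y (toC ((Vmᵀ * Vm)⁻¹ * Vmᵀ) (toC Um xh))) =
        toC Y (toC ((Vmᵀ * Vm)⁻¹ * Vmᵀ) (toC Um xh)) := by
      rw [hp2, ← ContinuousLinearMap.comp_apply, ← toC_mul, projMat_mul_self hdetY]
    have htopv : toC S (toC Um xh) = u := by
      rw [← ContinuousLinearMap.comp_apply, ← toC_mul, hSU, ← hu2]
    have htopQ : toC S (toC (projMat Vm) (toC Um xh)) =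
        toC Y (toC ((Vmᵀ * Vm)⁻¹ * Vmᵀ) (toC Um xh)) := by
      rw [hQv2, ← ContinuousLinearMap.comp_apply, ← toC_mul, hSV]
    have hstep1 : ‖u - p2 u‖ ≤ ‖u - toC Y (toC ((Vmᵀ * Vm)⁻¹ * Vmᵀ) (toC Um xh))‖ :=
      proj_dist_le hp2sa hp2idem u _ hp2y'
    have hstep2 : ‖u - toC Y (toC ((Vmᵀ * Vm)⁻¹ * Vmᵀ) (toC Um xh))‖ ≤
        ‖toC Um xh - toC (projMat Vm) (toC Um xh)‖ := by
      have hsub : u - toC Y (toC ((Vmᵀ * Vm)⁻¹ * Vmᵀ) (toC Um xh)) =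
          toC S (toC Um xh - toC (projMat Vm) (toC Um xh)) := by
        rw [map_sub, htopv, htopQ]
      rw [hsub]
      exact norm_toC_le_of_ortho' hSrow _
    have hvx : ‖toC Um xh‖ = ‖xh‖ := norm_toC_of_ortho horth1 xh
    have hw : toC X (toC X⁻¹ xh) = xh := by
      rw [← ContinuousLinearMap.comp_apply, ← toC_mul, hXinv, toC_one]
      rfl
    have hwx : ‖xh‖ = ‖toC X⁻¹ xh‖ := by
      conv_lhs => rw [← hw]
      exact norm_toC_of_ortho hXT _
    have hYtx : toC Yt xh = toC G (toC (Matrix.diagonal β) (toC X⁻¹ xh)) := by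
      rw [hYtdecomp, toC_mul, toC_mul, ContinuousLinearMap.comp_apply,
        ContinuousLinearMap.comp_apply]
    have hxu : β i0 * ‖xh‖ ≤ ‖u‖ := by
      rw [hu2, hYtx, norm_toC_of_ortho hG, hwx]
      exact norm_toC_diagonal_ge hβ0.le (fun i => hi0 i (Finset.mem_univ i)) _
    have hxub : ‖xh‖ ≤ (β i0)⁻¹ * ‖u‖ := by
      rw [show ‖xh‖ = (β i0)⁻¹ * (β i0 * ‖xh‖) by field_simp]
      exact mul_le_mul_of_nonneg_left hxu (inv_nonneg.mpr hβ0.le)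
    calc ‖u - p2 u‖ ≤ ‖toC Um xh - toC (projMat Vm) (toC Um xh)‖ := le_trans hstep1 hstep2
    _ ≤ ε * ‖toC Um xh‖ := hvQ
    _ = ε * ‖xh‖ := by rw [hvx]
    _ ≤ ε * ((β i0)⁻¹ * ‖u‖) := mul_le_mul_of_nonneg_left hxub hε0
    _ = d * ‖u‖ := by rw [hd]; ring
  -- equal ranks
  have hr1 : Module.finrank ℝ (LinearMap.range
      (p1 : EuclideanSpace ℝ (Fin n) →ₗ[ℝ] EuclideanSpace ℝ (Fin n))) = p := by
    rw [hp1, finrank_range_toC_projMat hdetYt, hYt]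
  have hr2 : Module.finrank ℝ (LinearMap.range
      (p2 : EuclideanSpace ℝ (Fin n) →ₗ[ℝ] EuclideanSpace ℝ (Fin n))) = p := by
    rw [hp2, finrank_range_toC_projMat hdetY, hY]
  have hKey2 := key_transfer hp1sa hp1idem hp2sa hp2idem (hr1.trans hr2.symm) hd0 hKey1
  have hfinal : ‖p1 - p2‖ ≤ d :=
    proj_diff_norm_le hp1sa hp1idem hp2sa hp2idem hd0 hKey1 hKey2
  -- numeric comparison of the constants
  have hsup_ge : α i0 / β i0 ≤ ⨆ i, α i / β i :=
    le_ciSup (f := fun i => α i / β i) (Set.Finite.bddAbove (Set.finite_range _)) i0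
  have hdiv0 : 0 ≤ α i0 / β i0 := div_nonneg (hα i0).1.le hβ0.le
  have hs1 : (β i0)⁻¹ ≤ Real.sqrt (1 + (⨆ i, α i / β i) ^ 2) := by
    rw [show (β i0)⁻¹ = Real.sqrt (((β i0)⁻¹) ^ 2) from
      (Real.sqrt_sq (inv_nonneg.mpr hβ0.le)).symm]
    apply Real.sqrt_le_sqrt
    have hc : ((β i0)⁻¹) ^ 2 = 1 + (α i0 / β i0) ^ 2 := by
      have := hCS i0
      field_simp
      linarith
    rw [hc]
    have := pow_le_pow_left₀ hdiv0 hsup_ge 2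
    linarith
  have hnum : d ≤ Real.sqrt (1 + (⨆ i, α i / β i) ^ 2) * ε := by
    rw [hd]
    exact mul_le_mul_of_nonneg_right hs1 hε0
  have hL : snorm (projMat Yt - projMat Y) = ‖p1 - p2‖ := by
    rw [snorm_eq_norm_toC, toC_sub, ← hp1, ← hp2]
  calc snorm (projMat Yt - projMat Y) = ‖p1 - p2‖ := hL
  _ ≤ d := hfinal
  _ ≤ Real.sqrt (1 + (⨆ i, α i / β i) ^ 2) * ε := hnum
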